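/- For a fixed 2DFA M, the map α_{y,z} that sends each exit state q ∈ Q_LR(y) to the state (if any) hit right by the computation of M started in state q at position |y|+1 of the string yz is a partial surjection from Q_LR(y) onto Q_LR(yz); consequently |Q_LR(y)| ≥ |Q_LR(yz)| for all strings y, z. -/

import Mathlib

/-- A two-way deterministic finite automaton: `step q a = (q', d)` where `d = true`
means the head moves right and `d = false` means it moves left. -/
structure TDFA (Q A : Type) where
  step : Q → A → Q × Bool
  start : Q
  accept : Q

namespace TDFA

variable {Q A : Type}

/-- One step of `M` on string `w`. A configuration is a pair (state, position),
with positions `1, …, w.length` on the symbols of `w`, position `0` meaning the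
computation has fallen off the left end and `w.length + 1` off the right end. -/
def Step (M : TDFA Q A) (w : List A) (c c' : Q × ℕ) : Prop :=
  ∃ a, w[c.2 - 1]? = some a ∧ 1 ≤ c.2 ∧
    c' = ((M.step c.1 a).1, if (M.step c.1 a).2 then c.2 + 1 else c.2 - 1)

/-- The computation of `M` on `w` started in state `p` at position `j`
hits right into state `q`. -/
def ReachesRight (M : TDFA Q A) (w : List A) (p : Q) (j : ℕ) (q : Q) : Prop :=
  Relation.ReflTransGen (M.Step w) (p, j) (q, w.length + 1)

/-- The computation of `M` on `w` started in state `p` at position `j`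
hits left into state `q`. -/
def ReachesLeft (M : TDFA Q A) (w : List A) (p : Q) (j : ℕ) (q : Q) : Prop :=
  Relation.ReflTransGen (M.Step w) (p, j) (q, 0)

/-- `Q_LR(w)`: states hit right by left computations of `M` on `w`. -/
def QLR (M : TDFA Q A) (w : List A) : Set Q := {q | ∃ p, M.ReachesRight w p 1 q}

/-- `Q_RL(w)`: states hit left by right computations of `M` on `w`. -/
def QRL (M : TDFA Q A) (w : List A) : Set Q := {q | ∃ p, M.ReachesLeft w p w.length q}

end TDFA

section Aux

variable {Q A : Type}

private theorem rtg_unique {α : Type*} {R : α → α → Prop}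
    (hdet : ∀ a b c, R a b → R a c → b = c)
    {b c : α} (hb : ∀ x, ¬ R b x) (hc : ∀ x, ¬ R c x) :
    ∀ {a}, Relation.ReflTransGen R a b → Relation.ReflTransGen R a c → b = c := by
  intro a h1
  induction h1 using Relation.ReflTransGen.head_induction_on with
  | refl =>
    intro h2
    rcases Relation.ReflTransGen.cases_head h2 with rfl | ⟨x, hx, _⟩
    · rfl
    · exact absurd hx (hb x)
  | head hstep _ ih =>
    intro h2
    rcases Relation.ReflTransGen.cases_head h2 with rfl | ⟨x, hx, h2'⟩
    · exact absurd hstep (hc _)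
    · exact ih ((hdet _ _ _ hstep hx) ▸ h2')

private theorem step_det (M : TDFA Q A) (w : List A) {c c1 c2 : Q × ℕ}
    (h1 : M.Step w c c1) (h2 : M.Step w c c2) : c1 = c2 := by
  obtain ⟨a, ha, _, rfl⟩ := h1
  obtain ⟨b, hb, _, rfl⟩ := h2
  rw [ha] at hb
  cases hb
  rfl

private theorem step_terminal (M : TDFA Q A) (w : List A) (q : Q) (x : Q × ℕ) :
    ¬ M.Step w (q, w.length + 1) x := by
  rintro ⟨a, ha, -, -⟩
  simp only [Nat.add_sub_cancel] at ha
  rw [List.getElem?_eq_none le_rfl] at ha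
  exact Option.some_ne_none a ha.symm

private theorem step_append (M : TDFA Q A) (y z : List A) {c c' : Q × ℕ}
    (h : M.Step y c c') : M.Step (y ++ z) c c' := by
  obtain ⟨a, ha, h1, h2⟩ := h
  have hidx : c.2 - 1 < y.length := (List.getElem?_eq_some_iff.mp ha).1
  exact ⟨a, by rw [List.getElem?_append_left hidx]; exact ha, h1, h2⟩

private theorem rr_append (M : TDFA Q A) (y z : List A) {q : Q} {c : Q × ℕ}
    (h : Relation.ReflTransGen (M.Step y) c (q, y.length + 1)) :
    Relation.ReflTransGen (M.Step (y ++ z)) c (q, y.length + 1) := by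
  induction h using Relation.ReflTransGen.head_induction_on with
  | refl => exact .refl
  | head hstep _ ih => exact .head (step_append M y z hstep) ih

private theorem split_run (M : TDFA Q A) (y z : List A) {q' : Q} {c : Q × ℕ}
    (h : Relation.ReflTransGen (M.Step (y ++ z)) c (q', (y ++ z).length + 1)) :
    c.2 ≤ y.length →
    ∃ q, M.ReachesRight y c.1 c.2 q ∧ M.ReachesRight (y ++ z) q (y.length + 1) q' := by
  induction h using Relation.ReflTransGen.head_induction_on with
  | refl =>
    intro hle
    simp only [List.length_append] at hle
    omega
  | @head c b hstep h' ih =>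
    intro hle
    obtain ⟨a, ha, h1, rfl⟩ := hstep
    have hidx : c.2 - 1 < y.length := by omega
    have hay : y[c.2 - 1]? = some a := by rw [List.getElem?_append_left hidx] at ha; exact ha
    by_cases hd : (M.step c.1 a).2
    · simp only [hd, if_true] at h' ih
      rcases Nat.lt_or_ge c.2 y.length with hlt | hge
      · obtain ⟨q, hq1, hq2⟩ := ih (by omega)
        exact ⟨q, .head ⟨a, hay, h1, by simp [hd]⟩ hq1, hq2⟩
      · have hceq : c.2 = y.length := le_antisymm hle hge
        have hstep : M.Step y c ((M.step c.1 a).1, c.2 + 1) := ⟨a, hay, h1, by simp [hd]⟩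
        refine ⟨(M.step c.1 a).1, ?_, ?_⟩
        · unfold TDFA.ReachesRight
          rw [← hceq]
          exact Relation.ReflTransGen.single hstep
        · unfold TDFA.ReachesRight
          rw [← hceq]
          exact h'
    · simp only [hd, Bool.false_eq_true, if_false] at h' ih
      obtain ⟨q, hq1, hq2⟩ := ih (by omega)
      exact ⟨q, .head ⟨a, hay, h1, by simp [hd]⟩ hq1, hq2⟩

end Aux


/-- The map `α_{y,z}` (sending `q ∈ Q_LR(y)` to the state hit right by the computation
of `M` on `yz` started in `q` at position `|y|+1`) is a partial function on `Q_LR(y)`,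
maps into `Q_LR(yz)`, is surjective onto `Q_LR(yz)`; hence `|Q_LR(y)| ≥ |Q_LR(yz)|`. -/
theorem alpha_partial_surjection {Q A : Type} [Fintype Q] (M : TDFA Q A) (y z : List A) :
    (∀ q ∈ M.QLR y, ∀ q1 q2 : Q,
        M.ReachesRight (y ++ z) q (y.length + 1) q1 →
        M.ReachesRight (y ++ z) q (y.length + 1) q2 → q1 = q2) ∧
    (∀ q ∈ M.QLR y, ∀ q' : Q,
        M.ReachesRight (y ++ z) q (y.length + 1) q' → q' ∈ M.QLR (y ++ z)) ∧
    (∀ q' ∈ M.QLR (y ++ z), ∃ q ∈ M.QLR y,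
        M.ReachesRight (y ++ z) q (y.length + 1) q') ∧
    (M.QLR (y ++ z)).ncard ≤ (M.QLR y).ncard := by
  have n1 : ∀ (q q1 q2 : Q), M.ReachesRight (y ++ z) q (y.length + 1) q1 →
      M.ReachesRight (y ++ z) q (y.length + 1) q2 → q1 = q2 := by
    intro q q1 q2 h1 h2
    have h := rtg_unique (R := M.Step (y ++ z)) (fun _ _ _ a b => step_det M (y ++ z) a b)
      (step_terminal M (y ++ z) q1) (step_terminal M (y ++ z) q2) h1 h2
    exact (Prod.ext_iff.mp h).1
  refine ⟨fun q _ q1 q2 h1 h2 => n1 q q1 q2 h1 h2, ?_, ?_, ?_⟩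
  · rintro q ⟨p, hp⟩ q' h
    exact ⟨p, Relation.ReflTransGen.trans (rr_append M y z hp) h⟩
  · rintro q' ⟨p, hp⟩
    rcases Nat.eq_zero_or_pos y.length with hy | hy
    · refine ⟨p, ⟨p, ?_⟩, ?_⟩
      · unfold TDFA.ReachesRight
        rw [hy]
      · rw [hy]; exact hp
    · obtain ⟨q, hq1, hq2⟩ := split_run M y z hp hy
      exact ⟨q, ⟨p, hq1⟩, hq2⟩
  · rcases (M.QLR (y ++ z)).eq_empty_or_nonempty with he | ⟨q0, hq0⟩
    · simp [he]
    · have : Nonempty Q := ⟨q0⟩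
      have h3 : ∀ q' ∈ M.QLR (y ++ z), ∃ q ∈ M.QLR y,
          M.ReachesRight (y ++ z) q (y.length + 1) q' := by
        rintro q' ⟨p, hp⟩
        rcases Nat.eq_zero_or_pos y.length with hy | hy
        · refine ⟨p, ⟨p, ?_⟩, ?_⟩
          · unfold TDFA.ReachesRight
            rw [hy]
          · rw [hy]; exact hp
        · obtain ⟨q, hq1, hq2⟩ := split_run M y z hp hy
          exact ⟨q, ⟨p, hq1⟩, hq2⟩
      classical
      set f : Q → Q := fun q' =>
        if h : q' ∈ M.QLR (y ++ z) then (h3 q' h).choose else Classical.arbitrary Q with hf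
      apply Set.ncard_le_ncard_of_injOn f
      · intro q' hq'
        have := (h3 q' hq').choose_spec
        simp only [hf, dif_pos hq']
        exact this.1
      · intro a ha b hb hab
        simp only [hf, dif_pos ha, dif_pos hb] at hab
        have ha' := (h3 a ha).choose_spec
        have hb' := (h3 b hb).choose_spec
        exact n1 _ a b ha'.2 (hab ▸ hb'.2)
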